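/- Let S be a finite singleton-rich semigroup, s, t ∈ S, and define φ(x,y) = (x* y)⁺, with the sequences s^φ₀ = s, t^φ₀ = t, s^φ_{i+1} = s^φ_i φ(s^φ_i, t^φ_i), t^φ_{i+1} = (s^φ_i)* t^φ_i. Then φ(s^φ_i, t^φ_i) ≤ (s^φ_i)* and φ(s^φ_{i+1}, t^φ_{i+1}) ≤ φ(s^φ_i, t^φ_i) for all i ≥ 0. -/
import Mathlib


open scoped Classical

/-- φ*(s): the idempotent right identities of `s`. -/
def rIds {S : Type*} [Mul S] (s : S) : Set S := {e | e * e = e ∧ s * e = s}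

/-- φ⁺(s): the idempotent left identities of `s`. -/
def lIds {S : Type*} [Mul S] (s : S) : Set S := {e | e * e = e ∧ e * s = s}

/-- `x` is the (necessarily unique) element of a singleton kernel (minimal ideal) of the
subsemigroup `T`: `{x}` is an ideal of `T`, hence the minimal ideal of `T`. -/
def IsKer {S : Type*} [Semigroup S] (T : Subsemigroup S) (x : S) : Prop :=
  x ∈ T ∧ ∀ a ∈ T, a * x = x ∧ x * a = x

/-- The natural partial order on idempotents: `e ≤ f` iff `ef = fe = e`. -/
def nle {S : Type*} [Mul S] (e f : S) : Prop := e * f = e ∧ f * e = e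

/-- The relation `≪`: `s ≪ t` iff `s = s⁺ t s*`, where `sa s = s*` and `pl s = s⁺`. -/
def ll {S : Type*} [Mul S] (sa pl : S → S) (s t : S) : Prop := s = pl s * t * sa s

/-- φ(x,y) = (x* y)⁺. -/
def phiF {S : Type*} [Mul S] (sa pl : S → S) (x y : S) : S := pl (sa x * y)

/-- ψ(x,y) = (x y⁺)*. -/
def psiF {S : Type*} [Mul S] (sa pl : S → S) (x y : S) : S := sa (x * pl y)

/-- The φ-sequence: `(s^φ₀, t^φ₀) = (s, t)`,
`s^φ_{i+1} = s^φ_i φ(s^φ_i, t^φ_i)`, `t^φ_{i+1} = (s^φ_i)* t^φ_i`. -/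
def phiSeq {S : Type*} [Mul S] (sa pl : S → S) (s t : S) : ℕ → S × S
  | 0 => (s, t)
  | i + 1 =>
      let p := phiSeq sa pl s t i
      (p.1 * phiF sa pl p.1 p.2, sa p.1 * p.2)

/-- The ψ-sequence: `(s^ψ₀, t^ψ₀) = (s, t)`,
`s^ψ_{i+1} = s^ψ_i (t^ψ_i)⁺`, `t^ψ_{i+1} = ψ(s^ψ_i, t^ψ_i) t^ψ_i`. -/
def psiSeq {S : Type*} [Mul S] (sa pl : S → S) (s t : S) : ℕ → S × S
  | 0 => (s, t)
  | i + 1 =>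
      let p := psiSeq sa pl s t i
      (p.1 * pl p.2, psiF sa pl p.1 p.2 * p.2)


section Aux
variable {S : Type*} [Semigroup S]

lemma pl_idem (pl : S → S) (hpl : ∀ s : S, IsKer (Subsemigroup.closure (lIds s)) (pl s))
    (x : S) : pl x * pl x = pl x :=
  ((hpl x).2 (pl x) (hpl x).1).1

lemma sa_idem (sa : S → S) (hsa : ∀ s : S, IsKer (Subsemigroup.closure (rIds s)) (sa s))
    (x : S) : sa x * sa x = sa x :=
  ((hsa x).2 (sa x) (hsa x).1).1

lemma pl_min (pl : S → S) (hpl : ∀ s : S, IsKer (Subsemigroup.closure (lIds s)) (pl s))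
    {x f : S} (hf : f * f = f) (hfx : f * x = x) : nle (pl x) f := by
  have hmem : f ∈ Subsemigroup.closure (lIds x) :=
    Subsemigroup.subset_closure ⟨hf, hfx⟩
  have h := (hpl x).2 f hmem
  exact ⟨h.2, h.1⟩

lemma sa_absorb (sa : S → S) (hsa : ∀ s : S, IsKer (Subsemigroup.closure (rIds s)) (sa s))
    {x e : S} (he : e * e = e) (hxe : x * e = x) : e * sa x = sa x ∧ sa x * e = sa x :=
  (hsa x).2 e (Subsemigroup.subset_closure ⟨he, hxe⟩)

end Aux

/-- `φ(s^φ_i, t^φ_i) ≤ (s^φ_i)*` and `φ(s^φ_{i+1}, t^φ_{i+1}) ≤ φ(s^φ_i, t^φ_i)` for all `i`. -/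

theorem stmt9 {S : Type*} [Semigroup S] [Fintype S] (sa pl : S → S)
    (hsa : ∀ s : S, IsKer (Subsemigroup.closure (rIds s)) (sa s))
    (hpl : ∀ s : S, IsKer (Subsemigroup.closure (lIds s)) (pl s))
    (s t : S) :
    ∀ i : ℕ,
      nle (phiF sa pl (phiSeq sa pl s t i).1 (phiSeq sa pl s t i).2)
          (sa (phiSeq sa pl s t i).1) ∧
      nle (phiF sa pl (phiSeq sa pl s t (i + 1)).1 (phiSeq sa pl s t (i + 1)).2)
          (phiF sa pl (phiSeq sa pl s t i).1 (phiSeq sa pl s t i).2) := by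
  intro i
  set x := (phiSeq sa pl s t i).1 with hx
  set y := (phiSeq sa pl s t i).2 with hy
  have hseq : phiSeq sa pl s t (i + 1) = (x * phiF sa pl x y, sa x * y) := rfl
  have hsaidem := sa_idem sa hsa x
  -- Part 1: φ(x,y) ≤ sa x
  have h1 : nle (phiF sa pl x y) (sa x) := by
    apply pl_min pl hpl hsaidem
    rw [← mul_assoc, hsaidem]
  -- Part 2
  set φ := phiF sa pl x y with hφ
  have hφidem : φ * φ = φ := pl_idem pl hpl _
  have habs : φ * sa (x * φ) = sa (x * φ) ∧ sa (x * φ) * φ = sa (x * φ) :=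
    sa_absorb sa hsa hφidem (by rw [mul_assoc, hφidem])
  have h2 : nle (phiF sa pl (x * φ) (sa x * y)) φ := by
    apply pl_min pl hpl hφidem
    rw [← mul_assoc, ← mul_assoc, habs.1, mul_assoc]
  exact ⟨h1, by rw [hseq]; exact h2⟩
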